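/- If A is a countable set and E ⊆ Tr(A) is a topologically closed transformation monoid with automatic continuity (every monoid homomorphism from E to Tr(Ω), for any countable set Ω, is continuous), then the clone ⟨E⟩ generated by E also has automatic continuity: every clone homomorphism from ⟨E⟩ to the clone O_Ω of all finitary operations on a countable set Ω is continuous. -/

import Mathlib

/-- The type of `(n+1)`-ary operations on `A` (arities are `≥ 1`). -/
abbrev Ops (A : Type*) (n : ℕ) : Type _ := (Fin (n + 1) → A) → A

/-- The topology of pointwise convergence on `(n+1)`-ary operations
(the codomain taken discrete). -/
def opsTop (A : Type*) (n : ℕ) : TopologicalSpace (Ops A n) :=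
  @Pi.topologicalSpace (Fin (n + 1) → A) (fun _ => A) (fun _ => ⊥)

/-- A (concrete) clone on `A`: a family of sets of `(n+1)`-ary operations containing all
projections and closed under composition. -/
structure IsClone {A : Type*} (C : ∀ n : ℕ, Set (Ops A n)) : Prop where
  proj_mem : ∀ (n : ℕ) (i : Fin (n + 1)), (fun x => x i) ∈ C n
  comp_mem : ∀ (n m : ℕ) (f : Ops A n) (g : Fin (n + 1) → Ops A m),
    f ∈ C n → (∀ i, g i ∈ C m) → (fun x => f (fun i => g i x)) ∈ C m

/-- A clone homomorphism from the clone `C` on `A` to the clone `D` on `B`: it maps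
`n`-ary members of `C` to `n`-ary members of `D`, sends each projection to the
corresponding projection and preserves composition. (It is recorded as a family of
total maps on operations; only its values on members of `C` matter.) -/
structure IsCloneHom {A B : Type*} (C : ∀ n : ℕ, Set (Ops A n)) (D : ∀ n : ℕ, Set (Ops B n))
    (θ : ∀ n : ℕ, Ops A n → Ops B n) : Prop where
  maps_mem : ∀ (n : ℕ) (f : Ops A n), f ∈ C n → θ n f ∈ D n
  map_proj : ∀ (n : ℕ) (i : Fin (n + 1)), θ n (fun x => x i) = fun x => x i
  map_comp : ∀ (n m : ℕ) (f : Ops A n) (g : Fin (n + 1) → Ops A m),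
    f ∈ C n → (∀ i, g i ∈ C m) →
    θ m (fun x => f (fun i => g i x)) = fun x => θ n f (fun i => θ m (g i) x)

/-- Topology of pointwise convergence on `Tr(α) = Function.End α` (the codomain
taken discrete). -/
def funTop (α : Type*) : TopologicalSpace (Function.End α) :=
  @Pi.topologicalSpace α (fun _ => α) (fun _ => ⊥)

/-- The induced (subspace) topology on a submonoid of `Tr(α) = Function.End α`. -/
def monTop {α : Type*} (S : Submonoid (Function.End α)) : TopologicalSpace S :=
  (funTop α).induced Subtype.val

/-- The clone `⟨E⟩` generated by a transformation monoid `E ⊆ Tr(A)`, consisting of all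
operations `f ∘ πᵢⁿ` with `f ∈ E`. -/
def genClone {A : Type*} (E : Set (Function.End A)) : ∀ n : ℕ, Set (Ops A n) :=
  fun n => {F | ∃ (i : Fin (n + 1)) (f : Function.End A), f ∈ E ∧ F = fun x => f (x i)}

private def cloneToMonoidHom {A Ω : Type} (E : Submonoid (Function.End A))
    (θ : ∀ n : ℕ, Ops A n → Ops Ω n)
    (hθ : IsCloneHom (genClone (E : Set (Function.End A))) (fun _ => Set.univ) θ) :
    E →* Function.End Ω where
  toFun f := fun ω => θ 0 (fun x => (f : Function.End A) (x 0)) (fun _ => ω)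
  map_one' := by
    funext ω
    have h1 : (fun x : Fin 1 → A => ((1 : E) : Function.End A) (x 0))
        = fun x : Fin 1 → A => x 0 := rfl
    show θ 0 (fun x => ((1 : E) : Function.End A) (x 0)) (fun _ => ω) = ω
    rw [h1, hθ.map_proj 0 0]
  map_mul' := by
    intro f g
    funext ω
    have hc := hθ.map_comp 0 0 (fun x => (f : Function.End A) (x 0))
      (fun _ => fun x : Fin 1 → A => (g : Function.End A) (x 0))
      ⟨0, f, f.2, rfl⟩ (fun _ => ⟨0, g, g.2, rfl⟩)
    have h1 : (fun x : Fin 1 → A => ((f * g : E) : Function.End A) (x 0))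
        = fun x : Fin 1 → A => (fun y : Fin 1 → A => (f : Function.End A) (y 0))
            (fun i => (fun _ : Fin 1 => fun z : Fin 1 → A => (g : Function.End A) (z 0)) i x) := rfl
    show θ 0 (fun x => ((f * g : E) : Function.End A) (x 0)) (fun _ => ω) = _
    rw [h1, hc]
    rfl

private lemma theta_formula {A Ω : Type} (E : Submonoid (Function.End A))
    (θ : ∀ n : ℕ, Ops A n → Ops Ω n)
    (hθ : IsCloneHom (genClone (E : Set (Function.End A))) (fun _ => Set.univ) θ)
    (m : ℕ) (i : Fin (m + 1)) (f : E) (w : Fin (m + 1) → Ω) :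
    θ m (fun x => (f : Function.End A) (x i)) w
      = cloneToMonoidHom E θ hθ f (w i) := by
  have hc := hθ.map_comp 0 m (fun x : Fin 1 → A => (f : Function.End A) (x 0))
    (fun _ => fun x : Fin (m + 1) → A => x i)
    ⟨0, f, f.2, rfl⟩ (fun _ => ⟨i, 1, E.one_mem, rfl⟩)
  have h1 : (fun x : Fin (m + 1) → A => (f : Function.End A) (x i))
      = fun x : Fin (m + 1) → A => (fun y : Fin 1 → A => (f : Function.End A) (y 0))
          (fun j => (fun _ : Fin 1 => fun z : Fin (m + 1) → A => z i) j x) := rfl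
  rw [h1, hc]
  simp only [hθ.map_proj]
  rfl

private lemma eval_eq_open {ι X : Type*} [TopologicalSpace X] [DiscreteTopology X]
    (i : ι) (c : X) : IsOpen {y : ι → X | y i = c} :=
  (continuous_apply (A := fun _ : ι => X) i).isOpen_preimage {c} (isOpen_discrete _)

private lemma pi_discrete_open {ι X : Type*} [TopologicalSpace X] [DiscreteTopology X]
    {U : Set (ι → X)} (hU : IsOpen U) {x : ι → X} (hx : x ∈ U) :
    ∃ S : Set ι, S.Finite ∧ ∀ y : ι → X, (∀ i ∈ S, y i = x i) → y ∈ U := by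
  have h1 : U ∈ nhds x := hU.mem_nhds hx
  rw [nhds_pi, Filter.mem_pi] at h1
  obtain ⟨I, hI, t, ht, hsub⟩ := h1
  refine ⟨I, hI, fun y hy => hsub fun i hi => ?_⟩
  rw [hy i hi]
  have := ht i
  rwa [nhds_discrete, Filter.mem_pure] at this

private lemma pi_discrete_agree_nhds {ι X : Type*} [TopologicalSpace X] [DiscreteTopology X]
    {T : Set ι} (hT : T.Finite) (x : ι → X) :
    {y : ι → X | ∀ i ∈ T, y i = x i} ∈ nhds x := by
  have ho : IsOpen {y : ι → X | ∀ i ∈ T, y i = x i} := by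
    have he : {y : ι → X | ∀ i ∈ T, y i = x i} = ⋂ i ∈ T, (fun y : ι → X => y i) ⁻¹' {x i} := by
      ext y; simp
    rw [he]
    exact hT.isOpen_biInter fun i _ => (continuous_apply i).isOpen_preimage _ (isOpen_discrete _)
  exact ho.mem_nhds (fun i _ => rfl)

/-- **Corollary 6.4.** If `A` is countable and `E ⊆ Tr(A)` is a closed transformation
monoid with automatic continuity (every monoid homomorphism from `E` to `Tr(Ω)`, `Ω`
countable, is continuous), then the clone `⟨E⟩` generated by `E` has automatic
continuity: every clone homomorphism from `⟨E⟩` to the clone `O_Ω` of all operations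
on a countable set `Ω` is continuous. -/
theorem genClone_automatic_continuity {A : Type} [Countable A]
    (E : Submonoid (Function.End A))
    (hE : @IsClosed _ (funTop A) (E : Set (Function.End A)))
    (hac : ∀ (Ω : Type) [Countable Ω] (φ : E →* Function.End Ω),
      @Continuous _ _ (monTop E) (funTop Ω) φ) :
    ∀ (Ω : Type) [Countable Ω] (θ : ∀ n : ℕ, Ops A n → Ops Ω n),
      IsCloneHom (genClone (E : Set (Function.End A))) (fun _ => Set.univ) θ →
      ∀ n : ℕ, @Continuous {F : Ops A n // F ∈ genClone (E : Set (Function.End A)) n}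
        (Ops Ω n) ((opsTop A n).induced Subtype.val) (opsTop Ω n) (fun F => θ n F.1) := by
  intro Ω _ θ hθ n
  letI : TopologicalSpace A := ⊥
  letI : TopologicalSpace Ω := ⊥
  letI : TopologicalSpace (Function.End A) := funTop A
  letI : TopologicalSpace (Function.End Ω) := funTop Ω
  haveI : DiscreteTopology A := ⟨rfl⟩
  haveI : DiscreteTopology Ω := ⟨rfl⟩
  set φ := cloneToMonoidHom E θ hθ with hφdef
  -- pointwise continuity of φ
  have key : ∀ (f : E) (ω : Ω), ∃ S : Set A, S.Finite ∧
      ∀ g : E, (∀ a ∈ S, (g : Function.End A) a = (f : Function.End A) a) → φ g ω = φ f ω := by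
    intro f ω
    have hφ : Continuous (φ : E → Function.End Ω) := hac Ω φ
    have hV : IsOpen {h : Function.End Ω | h ω = φ f ω} :=
      eval_eq_open (ι := Ω) (X := Ω) ω (φ f ω)
    have hU' : IsOpen ((φ : E → Function.End Ω) ⁻¹' {h : Function.End Ω | h ω = φ f ω}) :=
      hφ.isOpen_preimage _ hV
    rw [isOpen_induced_iff] at hU'
    obtain ⟨U, hU, hUeq⟩ := hU'
    have hfU : (f : Function.End A) ∈ U := by
      have : f ∈ Subtype.val ⁻¹' U := hUeq ▸ rfl
      exact this
    obtain ⟨S, hSfin, hS⟩ := pi_discrete_open hU hfU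
    refine ⟨S, hSfin, fun g hg => ?_⟩
    have : g ∈ Subtype.val ⁻¹' U := hS _ hg
    rw [hUeq] at this
    exact this
  show Continuous fun F : {F : Ops A n // F ∈ genClone (E : Set (Function.End A)) n} => θ n F.1
  apply continuous_pi
  intro w
  rw [continuous_iff_continuousAt]
  intro F₀
  suffices goal : {F : {F : Ops A n // F ∈ genClone (E : Set (Function.End A)) n} |
      θ n F.1 w = θ n F₀.1 w} ∈ nhds F₀ by
    exact (Filter.tendsto_pure.2 goal).mono_right (pure_le_nhds _)
  obtain ⟨i₀, f₀, hf₀E, hF₀⟩ := F₀.2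
  -- collect the moduli of continuity
  choose Sj hSjfin hSj using fun j : Fin (n + 1) => key ⟨f₀, hf₀E⟩ (w j)
  set S : Set A := ⋃ j, Sj j with hSdef
  have hSfin : S.Finite := Set.finite_iUnion hSjfin
  by_cases hconst : ∀ a b : A, f₀ a = f₀ b
  · -- constant case
    set T : Set (Fin (n + 1) → A) := (fun a => (fun _ => a : Fin (n + 1) → A)) '' S with hTdef
    have hTfin : T.Finite := hSfin.image _
    have hNup : {G : Ops A n | ∀ x ∈ T, G x = F₀.1 x} ∈ nhds F₀.1 :=
      pi_discrete_agree_nhds hTfin F₀.1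
    rw [nhds_subtype]
    refine Filter.mem_comap.2 ⟨_, hNup, ?_⟩
    rintro ⟨F, j, g, hgE, rfl⟩ hagree
    simp only [Set.mem_setOf_eq]
    rw [theta_formula E θ hθ n j ⟨g, hgE⟩ w]
    have hrep : F₀.1 = fun x : Fin (n + 1) → A => f₀ (x j) := by
      rw [hF₀]; funext x; exact hconst _ _
    rw [hrep, theta_formula E θ hθ n j ⟨f₀, hf₀E⟩ w]
    refine hSj j ⟨g, hgE⟩ fun a ha => ?_
    have hx : (fun _ => a : Fin (n + 1) → A) ∈ T := ⟨a, Set.mem_iUnion_of_mem j ha, rfl⟩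
    have h3 := hagree _ hx
    rw [hF₀] at h3
    change g a = f₀ a at h3
    exact h3
  · push_neg at hconst
    obtain ⟨a, b, hab⟩ := hconst
    set xs : Fin (n + 1) → A := fun k => if k = i₀ then a else b with hxsdef
    set T : Set (Fin (n + 1) → A) :=
      ((fun c => (fun _ => c : Fin (n + 1) → A)) '' (S ∪ {a, b})) ∪ {xs} with hTdef
    have hTfin : T.Finite := ((hSfin.union (Set.finite_singleton a |>.union
      (Set.finite_singleton b))).image _).union (Set.finite_singleton xs)
    have hNup : {G : Ops A n | ∀ x ∈ T, G x = F₀.1 x} ∈ nhds F₀.1 :=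
      pi_discrete_agree_nhds hTfin F₀.1
    rw [nhds_subtype]
    refine Filter.mem_comap.2 ⟨_, hNup, ?_⟩
    rintro ⟨F, j, g, hgE, rfl⟩ hagree
    simp only [Set.mem_setOf_eq]
    have hconsts : ∀ c ∈ S ∪ {a, b}, g c = f₀ c := by
      intro c hc
      have hx : (fun _ => c : Fin (n + 1) → A) ∈ T := Or.inl ⟨c, hc, rfl⟩
      have h3 := hagree _ hx
      rw [hF₀] at h3
      change g c = f₀ c at h3
      exact h3
    have hji : j = i₀ := by
      by_contra hne
      have hx : xs ∈ T := Or.inr rfl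
      have h2 := hagree _ hx
      rw [hF₀] at h2
      change g (xs j) = f₀ (xs i₀) at h2
      have hga : g (xs j) = g b := by rw [hxsdef]; simp [hne]
      have hfa : f₀ (xs i₀) = f₀ a := by rw [hxsdef]; simp
      rw [hga, hfa] at h2
      have hgb : g b = f₀ b := hconsts b (Or.inr (Or.inr rfl))
      exact hab (hgb ▸ h2).symm
    subst hji
    rw [theta_formula E θ hθ n j ⟨g, hgE⟩ w, hF₀, theta_formula E θ hθ n j ⟨f₀, hf₀E⟩ w]
    exact hSj j ⟨g, hgE⟩ fun c hc => hconsts c (Or.inl (Set.mem_iUnion_of_mem j hc))
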